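/- arXiv:0806.1423 — 2 statements merged into one kernel-verified Lean document; each statement's English description precedes it below -/
import Mathlib

section
/- Let 𝒞 and 𝒟 be preadditive categories and let F : 𝒞 ⥤ 𝒟 be a functor with a left adjoint L : 𝒟 ⥤ 𝒞 and a right adjoint R : 𝒟 ⥤ 𝒞 (L, F, R additive). Then the following statements are equivalent: (i) R is a left quasi-adjoint of F, i.e. there exist n ∈ ℕ and natural transformations ηᵢ : 𝟭_𝒟 ⟶ R ⋙ F and ζᵢ : F ⋙ R ⟶ 𝟭_𝒞 (1 ≤ i ≤ n) such that ∑ᵢ ζᵢ_{R(D)} ∘ R(ηᵢ_D) = 𝟙_{R(D)} for every object D of 𝒟; (ii) R is a direct summand of L in the category of additive functors 𝒟 ⥤ 𝒞, i.e. there exist n ∈ ℕ and natural transformations φᵢ : R ⟶ L and ψᵢ : L ⟶ R (1 ≤ i ≤ n) such that ∑ᵢ ψᵢ ∘ φᵢ = 𝟙_R (the identity natural transformation of R); (iii) F is a left quasi-adjoint of L, i.e. there exist n ∈ ℕ and natural transformations ηᵢ : 𝟭_𝒞 ⟶ F ⋙ L and ζᵢ : L ⋙ F ⟶ 𝟭_𝒟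 (1 ≤ i ≤ n) such that ∑ᵢ ζᵢ_{F(C)} ∘ F(ηᵢ_C) = 𝟙_{F(C)} for every object C of 𝒞. -/
open CategoryTheory

/-- Component computation for (i) → (ii). -/
private theorem key12 {𝒞 : Type*} [Category 𝒞] {𝒟 : Type*} [Category 𝒟]
    (F : 𝒞 ⥤ 𝒟) (L R : 𝒟 ⥤ 𝒞)
    (adjLF : L ⊣ F) (η : 𝟭 𝒟 ⟶ R ⋙ F) (ζ : F ⋙ R ⟶ 𝟭 𝒞) (D : 𝒟) :
    (R.map (adjLF.unit.app D) ≫ ζ.app (L.obj D)) ≫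
      (L.map (η.app D) ≫ adjLF.counit.app (R.obj D)) =
    R.map (η.app D) ≫ ζ.app (R.obj D) := by
  have h1 := ζ.naturality (L.map (η.app D))
  have h2 := ζ.naturality (adjLF.counit.app (R.obj D))
  have h3 := adjLF.unit.naturality (η.app D)
  simp only [Functor.comp_map, Functor.id_map, Functor.id_obj, Functor.comp_obj] at h1 h2 h3
  have h4 : adjLF.unit.app D ≫ F.map (L.map (η.app D)) ≫ F.map (adjLF.counit.app (R.obj D))
      = η.app D := by
    rw [← Category.assoc, ← h3, Category.assoc, adjLF.right_triangle_components,
      Category.comp_id]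
  rw [Category.assoc, ← Category.assoc (ζ.app (L.obj D)), ← h1, Category.assoc, ← h2,
    ← Category.assoc, ← Category.assoc, ← R.map_comp, ← R.map_comp, Category.assoc, h4]

/-- Component computation for (ii) → (i). -/
private theorem key21 {𝒞 : Type*} [Category 𝒞] {𝒟 : Type*} [Category 𝒟]
    (F : 𝒞 ⥤ 𝒟) (L R : 𝒟 ⥤ 𝒞)
    (adjLF : L ⊣ F) (φ : R ⟶ L) (ψ : L ⟶ R) (D : 𝒟) :
    R.map (adjLF.unit.app D ≫ F.map (ψ.app D)) ≫
      (φ.app (F.obj (R.obj D)) ≫ adjLF.counit.app (R.obj D)) =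
    φ.app D ≫ ψ.app D := by
  have h1 := φ.naturality (F.map (ψ.app D))
  have h2 := adjLF.counit.naturality (ψ.app D)
  have h3 := φ.naturality (adjLF.unit.app D)
  simp only [Functor.comp_map, Functor.id_map, Functor.id_obj, Functor.comp_obj] at h1 h2 h3
  rw [R.map_comp, Category.assoc, ← Category.assoc (R.map (F.map (ψ.app D))), h1,
    Category.assoc, h2, ← Category.assoc, ← Category.assoc, h3]
  simp only [Category.assoc, adjLF.left_triangle_components_assoc]

/-- Component computation for (iii) → (ii). -/
private theorem key32 {𝒞 : Type*} [Category 𝒞] {𝒟 : Type*} [Category 𝒟]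
    (F : 𝒞 ⥤ 𝒟) (L R : 𝒟 ⥤ 𝒞)
    (adjFR : F ⊣ R) (η : 𝟭 𝒞 ⟶ F ⋙ L) (ζ : L ⋙ F ⟶ 𝟭 𝒟) (D : 𝒟) :
    (η.app (R.obj D) ≫ L.map (adjFR.counit.app D)) ≫
      (adjFR.unit.app (L.obj D) ≫ R.map (ζ.app D)) =
    adjFR.unit.app (R.obj D) ≫
      R.map (F.map (η.app (R.obj D)) ≫ ζ.app (F.obj (R.obj D))) ≫
      R.map (adjFR.counit.app D) := by
  have h1 := adjFR.unit.naturality (L.map (adjFR.counit.app D))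
  have h2 := ζ.naturality (adjFR.counit.app D)
  have h3 := adjFR.unit.naturality (η.app (R.obj D))
  simp only [Functor.comp_map, Functor.id_map, Functor.id_obj, Functor.comp_obj] at h1 h2 h3
  rw [Category.assoc, ← Category.assoc (L.map (adjFR.counit.app D)), h1,
    Category.assoc, ← R.map_comp, h2, ← Category.assoc, h3]
  simp [R.map_comp]

/-- For an additive functor `F : 𝒞 ⥤ 𝒟` between preadditive categories, with additive
left adjoint `L` and additive right adjoint `R`, the following are equivalent:
(i) `R` is a left quasi-adjoint of `F`;
(ii) `R` is a direct summand of `L` in the category of (additive) functors `𝒟 ⥤ 𝒞`;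
(iii) `F` is a left quasi-adjoint of `L`. -/
theorem left_quasi_adjoint_tfae
    {𝒞 : Type*} [Category 𝒞] [Preadditive 𝒞] {𝒟 : Type*} [Category 𝒟] [Preadditive 𝒟]
    (F : 𝒞 ⥤ 𝒟) (L R : 𝒟 ⥤ 𝒞) [F.Additive] [L.Additive] [R.Additive]
    (adjLF : L ⊣ F) (adjFR : F ⊣ R) :
    List.TFAE
      [ -- (i) R is a left quasi-adjoint of F
        (∃ (n : ℕ) (η : Fin n → (𝟭 𝒟 ⟶ R ⋙ F)) (ζ : Fin n → (F ⋙ R ⟶ 𝟭 𝒞)),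
          ∀ D : 𝒟, ∑ i, R.map ((η i).app D) ≫ (ζ i).app (R.obj D) = 𝟙 (R.obj D)),
        -- (ii) R is a direct summand of L
        (∃ (n : ℕ) (φ : Fin n → (R ⟶ L)) (ψ : Fin n → (L ⟶ R)),
          ∑ i, φ i ≫ ψ i = 𝟙 R),
        -- (iii) F is a left quasi-adjoint of L
        (∃ (n : ℕ) (η : Fin n → (𝟭 𝒞 ⟶ F ⋙ L)) (ζ : Fin n → (L ⋙ F ⟶ 𝟭 𝒟)),
          ∀ C : 𝒞, ∑ i, F.map ((η i).app C) ≫ (ζ i).app (F.obj C) = 𝟙 (F.obj C)) ] := by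
  tfae_have 1 → 2 := by
    rintro ⟨n, η, ζ, h⟩
    refine ⟨n, fun i => (Functor.whiskerRight adjLF.unit R ≫ Functor.whiskerLeft L (ζ i) : R ⟶ L),
      fun i => (Functor.whiskerRight (η i) L ≫ Functor.whiskerLeft R adjLF.counit : L ⟶ R), ?_⟩
    ext D
    simp only [NatTrans.app_sum, NatTrans.comp_app, NatTrans.id_app, Functor.whiskerRight_app,
      Functor.whiskerLeft_app]
    calc ∑ i, (R.map (adjLF.unit.app D) ≫ (ζ i).app (L.obj D)) ≫
            (L.map ((η i).app D) ≫ adjLF.counit.app (R.obj D))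
        = ∑ i, R.map ((η i).app D) ≫ (ζ i).app (R.obj D) :=
          Finset.sum_congr rfl fun i _ => key12 F L R adjLF (η i) (ζ i) D
      _ = 𝟙 (R.obj D) := h D
  tfae_have 2 → 1 := by
    rintro ⟨n, φ, ψ, h⟩
    refine ⟨n, fun i => (adjLF.unit ≫ Functor.whiskerRight (ψ i) F : 𝟭 𝒟 ⟶ R ⋙ F),
      fun i => (Functor.whiskerLeft F (φ i) ≫ adjLF.counit : F ⋙ R ⟶ 𝟭 𝒞), ?_⟩
    intro D
    have hD := congrArg (fun (α : R ⟶ R) => α.app D) h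
    simp only [NatTrans.app_sum, NatTrans.comp_app, NatTrans.id_app] at hD
    calc ∑ i, R.map (((adjLF.unit ≫ Functor.whiskerRight (ψ i) F : 𝟭 𝒟 ⟶ R ⋙ F)).app D) ≫
            ((Functor.whiskerLeft F (φ i) ≫ adjLF.counit : F ⋙ R ⟶ 𝟭 𝒞)).app (R.obj D)
        = ∑ i, (φ i).app D ≫ (ψ i).app D := by
          refine Finset.sum_congr rfl fun i _ => ?_
          simpa only [NatTrans.comp_app, Functor.whiskerRight_app, Functor.whiskerLeft_app, Functor.id_obj,
            Functor.comp_obj] using key21 F L R adjLF (φ i) (ψ i) D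
      _ = 𝟙 (R.obj D) := hD
  tfae_have 2 → 3 := by
    rintro ⟨n, φ, ψ, h⟩
    refine ⟨n, fun i => (adjFR.unit ≫ Functor.whiskerLeft F (φ i) : 𝟭 𝒞 ⟶ F ⋙ L),
      fun i => (Functor.whiskerRight (ψ i) F ≫ adjFR.counit : L ⋙ F ⟶ 𝟭 𝒟), ?_⟩
    intro C
    have hC := congrArg (fun (α : R ⟶ R) => α.app (F.obj C)) h
    simp only [NatTrans.app_sum, NatTrans.comp_app, NatTrans.id_app] at hC
    calc ∑ i, F.map (((adjFR.unit ≫ Functor.whiskerLeft F (φ i) : 𝟭 𝒞 ⟶ F ⋙ L)).app C) ≫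
            ((Functor.whiskerRight (ψ i) F ≫ adjFR.counit : L ⋙ F ⟶ 𝟭 𝒟)).app (F.obj C)
        = ∑ i, F.map (adjFR.unit.app C) ≫
            F.map ((φ i).app (F.obj C) ≫ (ψ i).app (F.obj C)) ≫
            adjFR.counit.app (F.obj C) := by
          refine Finset.sum_congr rfl fun i _ => ?_
          simp [F.map_comp]
      _ = F.map (adjFR.unit.app C) ≫
            F.map (∑ i, (φ i).app (F.obj C) ≫ (ψ i).app (F.obj C)) ≫
            adjFR.counit.app (F.obj C) := by
          rw [← Preadditive.comp_sum, ← Preadditive.sum_comp, Functor.map_sum]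
      _ = 𝟙 (F.obj C) := by
          rw [hC]
          simp
  tfae_have 3 → 2 := by
    rintro ⟨n, η, ζ, h⟩
    refine ⟨n, fun i => (Functor.whiskerLeft R (η i) ≫ Functor.whiskerRight adjFR.counit L : R ⟶ L),
      fun i => (Functor.whiskerLeft L adjFR.unit ≫ Functor.whiskerRight (ζ i) R : L ⟶ R), ?_⟩
    ext D
    simp only [NatTrans.app_sum, NatTrans.comp_app, NatTrans.id_app, Functor.whiskerRight_app,
      Functor.whiskerLeft_app]
    calc ∑ i, ((η i).app (R.obj D) ≫ L.map (adjFR.counit.app D)) ≫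
            (adjFR.unit.app (L.obj D) ≫ R.map ((ζ i).app D))
        = ∑ i, adjFR.unit.app (R.obj D) ≫
            R.map (F.map ((η i).app (R.obj D)) ≫ (ζ i).app (F.obj (R.obj D))) ≫
            R.map (adjFR.counit.app D) :=
          Finset.sum_congr rfl fun i _ => key32 F L R adjFR (η i) (ζ i) D
      _ = adjFR.unit.app (R.obj D) ≫
            R.map (∑ i, F.map ((η i).app (R.obj D)) ≫ (ζ i).app (F.obj (R.obj D))) ≫
            R.map (adjFR.counit.app D) := by
          rw [← Preadditive.comp_sum, ← Preadditive.sum_comp, Functor.map_sum]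
      _ = 𝟙 (R.obj D) := by
          rw [h (R.obj D)]
          simp
  tfae_finish
end

section
/- Let 𝒞 and 𝒟 be preadditive categories and let F : 𝒞 ⥤ 𝒟 be a functor with a left adjoint L : 𝒟 ⥤ 𝒞 and a right adjoint R : 𝒟 ⥤ 𝒞 (L, F, R additive). Then the following statements are equivalent: (i) (F,R) is a quasi-Frobenius pair, i.e. R is a left quasi-adjoint for F (∃ n, ηᵢ : 𝟭_𝒟 ⟶ R ⋙ F, ζᵢ : F ⋙ R ⟶ 𝟭_𝒞 with ∑ᵢ ζᵢ_{R(D)} ∘ R(ηᵢ_D) = 𝟙_{R(D)} for all D) and F is a right quasi-adjoint for R (∃ m, η'ⱼ : 𝟭_𝒟 ⟶ R ⋙ F, ζ'ⱼ : F ⋙ R ⟶ 𝟭_𝒞 with ∑ⱼ F(ζ'ⱼ_C) ∘ η'ⱼ_{F(C)} = 𝟙_{F(C)} for all C); (ii) (L,F,R) is a quasi-Frobenius triple, i.e. L and R are similar functors: there exist n, m ∈ ℕ and natural transformations φᵢ : L ⟶ R, ψᵢ : R ⟶ L (1 ≤ i ≤ n) with ∑ᵢ ψᵢ ∘ φᵢ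 = 𝟙_L, and φ'ⱼ : R ⟶ L, ψ'ⱼ : L ⟶ R (1 ≤ j ≤ m) with ∑ⱼ ψ'ⱼ ∘ φ'ⱼ = 𝟙_R; (iii) (L,F) is a quasi-Frobenius pair, i.e. F is a left quasi-adjoint for L (∃ n, ηᵢ : 𝟭_𝒞 ⟶ F ⋙ L, ζᵢ : L ⋙ F ⟶ 𝟭_𝒟 with ∑ᵢ ζᵢ_{F(C)} ∘ F(ηᵢ_C) = 𝟙_{F(C)} for all C) and L is a right quasi-adjoint for F (∃ m, η'ⱼ : 𝟭_𝒞 ⟶ F ⋙ L, ζ'ⱼ : L ⋙ F ⟶ 𝟭_𝒟 with ∑ⱼ L(ζ'ⱼ_D) ∘ η'ⱼ_{L(D)} = 𝟙_{L(D)} for all D). -/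
set_option linter.unnecessarySimpa false

open CategoryTheory Category

section QFhelpers
variable {𝒞 : Type*} [Category 𝒞] {𝒟 : Type*} [Category 𝒟]

section left
variable (F : 𝒞 ⥤ 𝒟) (L G : 𝒟 ⥤ 𝒞) (adj : L ⊣ F)

private lemma qf_termA (φ' : G ⟶ L) (ψ' : L ⟶ G) (D : 𝒟) :
    G.map (adj.unit.app D ≫ F.map (ψ'.app D)) ≫
      φ'.app (F.obj (G.obj D)) ≫ adj.counit.app (G.obj D) =
    φ'.app D ≫ ψ'.app D := by
  have h1 := φ'.naturality (F.map (ψ'.app D))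
  have h2 := adj.counit.naturality (ψ'.app D)
  have h3 := φ'.naturality (adj.unit.app D)
  simp only [Functor.comp_obj, Functor.id_obj, Functor.comp_map, Functor.id_map] at h1 h2 h3
  rw [Functor.map_comp, assoc, reassoc_of% h1, h2, reassoc_of% h3,
    adj.left_triangle_components_assoc D]

private lemma qf_termC (η : 𝟭 𝒟 ⟶ G ⋙ F) (ζ : F ⋙ G ⟶ 𝟭 𝒞) (D : 𝒟) :
    (G.map (adj.unit.app D) ≫ ζ.app (L.obj D)) ≫
      L.map (η.app D) ≫ adj.counit.app (G.obj D) =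
    G.map (η.app D) ≫ ζ.app (G.obj D) := by
  have h1 := ζ.naturality (L.map (η.app D))
  have h2 := ζ.naturality (adj.counit.app (G.obj D))
  have h3 := adj.unit.naturality (η.app D)
  simp only [Functor.comp_obj, Functor.id_obj, Functor.comp_map, Functor.id_map] at h1 h2 h3
  rw [assoc, ← reassoc_of% h1, ← h2]
  simp only [← Functor.map_comp_assoc]
  rw [← reassoc_of% h3, adj.right_triangle_components (G.obj D), comp_id]

private lemma qf_termD (η : 𝟭 𝒟 ⟶ G ⋙ F) (ζ : F ⋙ G ⟶ 𝟭 𝒞) (D : 𝒟) :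
    (L.map (η.app D) ≫ adj.counit.app (G.obj D)) ≫
      G.map (adj.unit.app D) ≫ ζ.app (L.obj D) =
    L.map (adj.unit.app D ≫ η.app (F.obj (L.obj D)) ≫ F.map (ζ.app (L.obj D))) ≫
      adj.counit.app (L.obj D) := by
  have h1 := adj.counit.naturality (G.map (adj.unit.app D))
  have h2 := adj.counit.naturality (ζ.app (L.obj D))
  have h3 := η.naturality (adj.unit.app D)
  simp only [Functor.comp_obj, Functor.id_obj, Functor.comp_map, Functor.id_map] at h1 h2 h3
  rw [assoc, ← reassoc_of% h1, ← h2]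
  simp only [← Functor.map_comp_assoc]
  rw [← reassoc_of% h3]

end left

section right
variable (F : 𝒞 ⥤ 𝒟) (R G : 𝒟 ⥤ 𝒞) (adj' : F ⊣ R)

private lemma qf_termA' (φ : G ⟶ R) (ψ : R ⟶ G) (D : 𝒟) :
    (adj'.unit.app (G.obj D) ≫ ψ.app (F.obj (G.obj D))) ≫
      G.map (F.map (φ.app D) ≫ adj'.counit.app D) =
    φ.app D ≫ ψ.app D := by
  have h1 := ψ.naturality (F.map (φ.app D))
  have h2 := ψ.naturality (adj'.counit.app D)
  have h3 := adj'.unit.naturality (φ.app D)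
  simp only [Functor.comp_obj, Functor.id_obj, Functor.comp_map, Functor.id_map] at h1 h2 h3
  rw [Functor.map_comp, assoc, ← reassoc_of% h1, ← h2, ← reassoc_of% h3,
    adj'.right_triangle_components_assoc D]

private lemma qf_termC' (η' : 𝟭 𝒞 ⟶ F ⋙ G) (ζ' : G ⋙ F ⟶ 𝟭 𝒟) (D : 𝒟) :
    (adj'.unit.app (G.obj D) ≫ R.map (ζ'.app D)) ≫
      η'.app (R.obj D) ≫ G.map (adj'.counit.app D) =
    η'.app (G.obj D) ≫ G.map (ζ'.app D) := by
  have h1 := η'.naturality (R.map (ζ'.app D))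
  have h2 := adj'.counit.naturality (ζ'.app D)
  have h3 := η'.naturality (adj'.unit.app (G.obj D))
  simp only [Functor.comp_obj, Functor.id_obj, Functor.comp_map, Functor.id_map] at h1 h2 h3
  rw [assoc, reassoc_of% h1, reassoc_of% h3,
    ← G.map_comp (F.map (R.map (ζ'.app D))), h2, G.map_comp, ← Functor.map_comp_assoc,
    adj'.left_triangle_components (G.obj D)]
  simp

private lemma qf_termD' (η : 𝟭 𝒞 ⟶ F ⋙ G) (ζ : G ⋙ F ⟶ 𝟭 𝒟) (D : 𝒟) :
    (η.app (R.obj D) ≫ G.map (adj'.counit.app D)) ≫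
      adj'.unit.app (G.obj D) ≫ R.map (ζ.app D) =
    adj'.unit.app (R.obj D) ≫
      R.map (F.map (η.app (R.obj D)) ≫ ζ.app (F.obj (R.obj D)) ≫ adj'.counit.app D) := by
  have h1 := adj'.unit.naturality (G.map (adj'.counit.app D))
  have h2 := ζ.naturality (adj'.counit.app D)
  have h3 := adj'.unit.naturality (η.app (R.obj D))
  simp only [Functor.comp_obj, Functor.id_obj, Functor.comp_map, Functor.id_map] at h1 h2 h3
  rw [assoc, reassoc_of% h1, reassoc_of% h3,
    ← R.map_comp (F.map (G.map (adj'.counit.app D))), h2, ← R.map_comp]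

end right
end QFhelpers



open CategoryTheory

/-- For an additive functor `F : 𝒞 ⥤ 𝒟` between preadditive categories, with additive
left adjoint `L` and additive right adjoint `R`, the following are equivalent:
(i) `(F,R)` is a quasi-Frobenius pair;
(ii) `(L,F,R)` is a quasi-Frobenius triple, i.e. `L` and `R` are similar functors;
(iii) `(L,F)` is a quasi-Frobenius pair. -/
theorem quasi_frobenius_pair_tfae
    {𝒞 : Type*} [Category 𝒞] [Preadditive 𝒞] {𝒟 : Type*} [Category 𝒟] [Preadditive 𝒟]
    (F : 𝒞 ⥤ 𝒟) (L R : 𝒟 ⥤ 𝒞) [F.Additive] [L.Additive] [R.Additive]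
    (adjLF : L ⊣ F) (adjFR : F ⊣ R) :
    List.TFAE
      [ -- (i) (F,R) is a quasi-Frobenius pair:
        -- R is a left quasi-adjoint for F and F is a right quasi-adjoint for R
        ((∃ (n : ℕ) (η : Fin n → (𝟭 𝒟 ⟶ R ⋙ F)) (ζ : Fin n → (F ⋙ R ⟶ 𝟭 𝒞)),
            ∀ D : 𝒟, ∑ i, R.map ((η i).app D) ≫ (ζ i).app (R.obj D) = 𝟙 (R.obj D)) ∧
          (∃ (m : ℕ) (η' : Fin m → (𝟭 𝒟 ⟶ R ⋙ F)) (ζ' : Fin m → (F ⋙ R ⟶ 𝟭 𝒞)),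
            ∀ C : 𝒞, ∑ j, (η' j).app (F.obj C) ≫ F.map ((ζ' j).app C) = 𝟙 (F.obj C))),
        -- (ii) (L,F,R) is a quasi-Frobenius triple: L and R are similar
        ((∃ (n : ℕ) (φ : Fin n → (L ⟶ R)) (ψ : Fin n → (R ⟶ L)),
            ∑ i, φ i ≫ ψ i = 𝟙 L) ∧
          (∃ (m : ℕ) (φ' : Fin m → (R ⟶ L)) (ψ' : Fin m → (L ⟶ R)),
            ∑ j, φ' j ≫ ψ' j = 𝟙 R)),
        -- (iii) (L,F) is a quasi-Frobenius pair:
        -- F is a left quasi-adjoint for L and L is a right quasi-adjoint for F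
        ((∃ (n : ℕ) (η : Fin n → (𝟭 𝒞 ⟶ F ⋙ L)) (ζ : Fin n → (L ⋙ F ⟶ 𝟭 𝒟)),
            ∀ C : 𝒞, ∑ i, F.map ((η i).app C) ≫ (ζ i).app (F.obj C) = 𝟙 (F.obj C)) ∧
          (∃ (m : ℕ) (η' : Fin m → (𝟭 𝒞 ⟶ F ⋙ L)) (ζ' : Fin m → (L ⋙ F ⟶ 𝟭 𝒟)),
            ∀ D : 𝒟, ∑ j, (η' j).app (L.obj D) ≫ L.map ((ζ' j).app D) = 𝟙 (L.obj D))) ] := by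
  
  tfae_have 2 → 1 := by
    rintro ⟨⟨n, φ, ψ, hL⟩, ⟨m, φ', ψ', hR⟩⟩
    constructor
    · refine ⟨m, fun j => adjLF.unit ≫ Functor.whiskerRight (ψ' j) F,
        fun j => Functor.whiskerLeft F (φ' j) ≫ adjLF.counit, fun D => ?_⟩
      have key : ∀ j, R.map ((adjLF.unit ≫ Functor.whiskerRight (ψ' j) F).app D) ≫
          (Functor.whiskerLeft F (φ' j) ≫ adjLF.counit).app (R.obj D) = (φ' j ≫ ψ' j).app D := fun j => by
        simpa using qf_termA F L R adjLF (φ' j) (ψ' j) D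
      rw [Finset.sum_congr rfl fun j _ => key j, ← NatTrans.app_sum, hR]
      rfl
    · refine ⟨n, fun i => adjLF.unit ≫ Functor.whiskerRight (φ i) F,
        fun i => Functor.whiskerLeft F (ψ i) ≫ adjLF.counit, fun C => ?_⟩
      have key : ∀ i, (adjLF.unit ≫ Functor.whiskerRight (φ i) F).app (F.obj C) ≫
          F.map ((Functor.whiskerLeft F (ψ i) ≫ adjLF.counit).app C) =
          adjLF.unit.app (F.obj C) ≫ F.map ((φ i ≫ ψ i).app (F.obj C)) ≫
            F.map (adjLF.counit.app C) := fun i => by simp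
      rw [Finset.sum_congr rfl fun i _ => key i, ← Preadditive.comp_sum,
        ← Preadditive.sum_comp, ← Functor.map_sum, ← NatTrans.app_sum, hL]
      simp
  tfae_have 1 → 2 := by
    rintro ⟨⟨n, η, ζ, hI1⟩, ⟨m, η', ζ', hI2⟩⟩
    constructor
    · refine ⟨m, fun j => (Functor.whiskerRight (η' j) L ≫ Functor.whiskerLeft R adjLF.counit : L ⟶ R),
        fun j => (Functor.whiskerRight adjLF.unit R ≫ Functor.whiskerLeft L (ζ' j) : R ⟶ L), ?_⟩
      ext D
      have key : ∀ j, ((Functor.whiskerRight (η' j) L ≫ Functor.whiskerLeft R adjLF.counit : L ⟶ R) ≫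
          (Functor.whiskerRight adjLF.unit R ≫ Functor.whiskerLeft L (ζ' j) : R ⟶ L)).app D =
          L.map (adjLF.unit.app D ≫ (η' j).app (F.obj (L.obj D)) ≫
            F.map ((ζ' j).app (L.obj D))) ≫ adjLF.counit.app (L.obj D) := fun j => by
        simpa using qf_termD F L R adjLF (η' j) (ζ' j) D
      rw [NatTrans.app_sum, Finset.sum_congr rfl fun j _ => key j, ← Preadditive.sum_comp,
        ← Functor.map_sum, ← Preadditive.comp_sum, hI2 (L.obj D)]
      simp
    · refine ⟨n, fun i => (Functor.whiskerRight adjLF.unit R ≫ Functor.whiskerLeft L (ζ i) : R ⟶ L),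
        fun i => (Functor.whiskerRight (η i) L ≫ Functor.whiskerLeft R adjLF.counit : L ⟶ R), ?_⟩
      ext D
      have key : ∀ i, ((Functor.whiskerRight adjLF.unit R ≫ Functor.whiskerLeft L (ζ i) : R ⟶ L) ≫
          (Functor.whiskerRight (η i) L ≫ Functor.whiskerLeft R adjLF.counit : L ⟶ R)).app D =
          R.map ((η i).app D) ≫ (ζ i).app (R.obj D) := fun i => by
        simpa using qf_termC F L R adjLF (η i) (ζ i) D
      rw [NatTrans.app_sum, Finset.sum_congr rfl fun i _ => key i, hI1 D]
      simp
  tfae_have 2 → 3 := by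
    rintro ⟨⟨n, φ, ψ, hL⟩, ⟨m, φ', ψ', hR⟩⟩
    constructor
    · refine ⟨m, fun j => adjFR.unit ≫ Functor.whiskerLeft F (φ' j),
        fun j => Functor.whiskerRight (ψ' j) F ≫ adjFR.counit, fun C => ?_⟩
      have key : ∀ j, F.map ((adjFR.unit ≫ Functor.whiskerLeft F (φ' j)).app C) ≫
          (Functor.whiskerRight (ψ' j) F ≫ adjFR.counit).app (F.obj C) =
          F.map (adjFR.unit.app C) ≫ F.map ((φ' j ≫ ψ' j).app (F.obj C)) ≫
            adjFR.counit.app (F.obj C) := fun j => by simp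
      rw [Finset.sum_congr rfl fun j _ => key j, ← Preadditive.comp_sum,
        ← Preadditive.sum_comp, ← Functor.map_sum, ← NatTrans.app_sum, hR]
      simp
    · refine ⟨n, fun i => adjFR.unit ≫ Functor.whiskerLeft F (ψ i),
        fun i => Functor.whiskerRight (φ i) F ≫ adjFR.counit, fun D => ?_⟩
      have key : ∀ i, (adjFR.unit ≫ Functor.whiskerLeft F (ψ i)).app (L.obj D) ≫
          L.map ((Functor.whiskerRight (φ i) F ≫ adjFR.counit).app D) = (φ i ≫ ψ i).app D := fun i => by
        simpa using qf_termA' F R L adjFR (φ i) (ψ i) D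
      rw [Finset.sum_congr rfl fun i _ => key i, ← NatTrans.app_sum, hL]
      rfl
  tfae_have 3 → 2 := by
    rintro ⟨⟨n, η, ζ, h1⟩, ⟨m, η', ζ', h2⟩⟩
    constructor
    · refine ⟨m, fun j => (Functor.whiskerLeft L adjFR.unit ≫ Functor.whiskerRight (ζ' j) R : L ⟶ R),
        fun j => (Functor.whiskerLeft R (η' j) ≫ Functor.whiskerRight adjFR.counit L : R ⟶ L), ?_⟩
      ext D
      have key : ∀ j, ((Functor.whiskerLeft L adjFR.unit ≫ Functor.whiskerRight (ζ' j) R : L ⟶ R) ≫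
          (Functor.whiskerLeft R (η' j) ≫ Functor.whiskerRight adjFR.counit L : R ⟶ L)).app D =
          (η' j).app (L.obj D) ≫ L.map ((ζ' j).app D) := fun j => by
        simpa using qf_termC' F R L adjFR (η' j) (ζ' j) D
      rw [NatTrans.app_sum, Finset.sum_congr rfl fun j _ => key j, h2 D]
      simp
    · refine ⟨n, fun i => (Functor.whiskerLeft R (η i) ≫ Functor.whiskerRight adjFR.counit L : R ⟶ L),
        fun i => (Functor.whiskerLeft L adjFR.unit ≫ Functor.whiskerRight (ζ i) R : L ⟶ R), ?_⟩
      ext D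
      have key : ∀ i, ((Functor.whiskerLeft R (η i) ≫ Functor.whiskerRight adjFR.counit L : R ⟶ L) ≫
          (Functor.whiskerLeft L adjFR.unit ≫ Functor.whiskerRight (ζ i) R : L ⟶ R)).app D =
          adjFR.unit.app (R.obj D) ≫ R.map (F.map ((η i).app (R.obj D)) ≫
            (ζ i).app (F.obj (R.obj D)) ≫ adjFR.counit.app D) := fun i => by
        simpa using qf_termD' F R L adjFR (η i) (ζ i) D
      have assocfix : ∑ i, F.map ((η i).app (R.obj D)) ≫
          (ζ i).app (F.obj (R.obj D)) ≫ adjFR.counit.app D =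
          (∑ i, F.map ((η i).app (R.obj D)) ≫ (ζ i).app (F.obj (R.obj D))) ≫
            adjFR.counit.app D := by
        rw [Preadditive.sum_comp]
        exact Finset.sum_congr rfl fun i _ => (assoc _ _ _).symm
      rw [NatTrans.app_sum, Finset.sum_congr rfl fun i _ => key i, ← Preadditive.comp_sum,
        ← Functor.map_sum, assocfix, h1 (R.obj D)]
      simp
  tfae_finish
end
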